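/- Let 0 < a < b ≤ 1, 0 < s < 1, and q > 1. Then |A(a^s, b^s) − L(a^s, b^s)| ≤ (s(b−a)/(L(a,b) · G(a,b)^{2(s−1)²})) · ((q−1)/(2q−1))^{1−1/q} · L(a^{(s²−s+1)q}, b^{(s²−s+1)q})^{1/q}. -/

import Mathlib

open Real

/-- Arithmetic mean. -/
noncomputable def Amean (x y : ℝ) : ℝ := (x + y) / 2

/-- Geometric mean. -/
noncomputable def Gmean (x y : ℝ) : ℝ := Real.sqrt (x * y)

/-- Logarithmic mean. -/
noncomputable def Lmean (x y : ℝ) : ℝ := (y - x) / (Real.log y - Real.log x)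

lemma deriv_trick (F F' : ℝ → ℝ) {u v : ℝ} (huv : u ≤ v)
    (hd : ∀ x ∈ Set.Icc u v, HasDerivAt F (F' x) x)
    (h0 : ∀ x ∈ Set.Icc u v, 0 ≤ F' x) : F u ≤ F v := by
  have hm : MonotoneOn F (Set.Icc u v) := by
    apply monotoneOn_of_deriv_nonneg (convex_Icc u v)
    · intro x hx
      exact (hd x hx).continuousAt.continuousWithinAt
    · intro x hx
      rw [interior_Icc] at hx
      exact (hd x (Set.Ioo_subset_Icc_self hx)).differentiableAt.differentiableWithinAt
    · intro x hx
      rw [interior_Icc] at hx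
      rw [(hd x (Set.Ioo_subset_Icc_self hx)).deriv]
      exact h0 x (Set.Ioo_subset_Icc_self hx)
  exact hm (Set.left_mem_Icc.2 huv) (Set.right_mem_Icc.2 huv) huv

lemma powsum {a b m k : ℝ} (ha : 0 < a) (hab : a ≤ b) (hm : 0 < m) (hk : 0 ≤ k) :
    a ^ k * ((b ^ m - a ^ m) / m) ≤ (b ^ (m + k) - a ^ (m + k)) / (m + k) := by
  have hmk : 0 < m + k := by linarith
  have key : ∀ x ∈ Set.Icc a b,
      HasDerivAt (fun x : ℝ => x ^ (m + k) / (m + k) - a ^ k * (x ^ m / m))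
        (x ^ (m + k - 1) - a ^ k * x ^ (m - 1)) x := by
    intro x hx
    have hx0 : (0:ℝ) < x := lt_of_lt_of_le ha hx.1
    have h1 : HasDerivAt (fun x : ℝ => x ^ (m + k) / (m + k))
        ((m + k) * x ^ (m + k - 1) / (m + k)) x :=
      (Real.hasDerivAt_rpow_const (Or.inl hx0.ne')).div_const _
    have h2 : HasDerivAt (fun x : ℝ => a ^ k * (x ^ m / m))
        (a ^ k * (m * x ^ (m - 1) / m)) x :=
      ((Real.hasDerivAt_rpow_const (Or.inl hx0.ne')).div_const _).const_mul _
    have := h1.sub h2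
    rw [mul_div_cancel_left₀ _ hmk.ne', mul_div_cancel_left₀ _ hm.ne'] at this
    exact this
  have hpos : ∀ x ∈ Set.Icc a b, 0 ≤ x ^ (m + k - 1) - a ^ k * x ^ (m - 1) := by
    intro x hx
    have hx0 : (0:ℝ) < x := lt_of_lt_of_le ha hx.1
    have h1 : x ^ (m + k - 1) = x ^ (m - 1) * x ^ k := by
      rw [← Real.rpow_add hx0]; ring_nf
    have h2 : a ^ k ≤ x ^ k := Real.rpow_le_rpow ha.le hx.1 hk
    rw [h1]
    have := mul_le_mul_of_nonneg_left h2 (le_of_lt (Real.rpow_pos_of_pos hx0 (m-1)))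
    nlinarith [Real.rpow_pos_of_pos hx0 (m-1)]
  have h := deriv_trick _ _ hab key hpos
  have haa : a ^ k * a ^ m = a ^ (m + k) := by rw [← Real.rpow_add ha]; ring_nf
  have e1 : a ^ k * ((b ^ m - a ^ m) / m) = a ^ k * (b ^ m / m) - a ^ k * (a ^ m / m) := by ring
  have e2 : (b ^ (m + k) - a ^ (m + k)) / (m + k)
      = b ^ (m + k) / (m + k) - a ^ (m + k) / (m + k) := by ring
  rw [e1, e2]
  linarith [h]

lemma holder2 {u v q : ℝ} (hu : 0 < u) (huv : u < v) (hq : 1 < q) :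
    v - u ≤ ((v ^ q - u ^ q) / q) ^ (1/q) * (Real.log v - Real.log u) ^ (1 - 1/q) := by
  have hv : 0 < v := hu.trans huv
  have hq0 : 0 < q := lt_trans one_pos hq
  set p : ℝ := q / (q - 1) with hpdef
  have hq1 : 0 < q - 1 := sub_pos.2 hq
  have hp0 : 0 < p := div_pos hq0 hq1
  have hpq : p.HolderConjugate q := by
    refine (Real.holderConjugate_iff_eq_conjExponent ?_).2 ?_
    · rw [hpdef]; rw [lt_div_iff₀ hq1]; linarith
    · rw [hpdef]; field_simp; ring
  have hinv : 1/p + 1/q = 1 := by rw [one_div, one_div]; exact hpq.inv_add_inv_eq_one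
  have h1p : 1/p = 1 - 1/q := by linarith
  set X : ℝ := (v ^ q - u ^ q) / q with hXdef
  set Y : ℝ := Real.log v - Real.log u with hYdef
  have hX : 0 < X := div_pos (sub_pos.2 (Real.rpow_lt_rpow hu.le huv hq0)) hq0
  have hY : 0 < Y := sub_pos.2 (Real.log_lt_log hu huv)
  set l : ℝ := (Y / X) ^ (1 / (p * q)) with hldef
  have hl : 0 < l := Real.rpow_pos_of_pos (div_pos hY hX) _
  -- pointwise Young inequality
  have young : ∀ x ∈ Set.Icc u v,
      1 ≤ l ^ q / q * x ^ (q - 1) + l ^ (-p) / p * x⁻¹ := by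
    intro x hx
    have hx0 : 0 < x := lt_of_lt_of_le hu hx.1
    set z : ℝ := l * x ^ (1/p) with hzdef
    have hz : 0 < z := mul_pos hl (Real.rpow_pos_of_pos hx0 _)
    have hyoung := Real.young_inequality_of_nonneg (le_of_lt (inv_pos.2 hz)) hz.le hpq
    rw [inv_mul_cancel₀ hz.ne'] at hyoung
    have e1 : z⁻¹ ^ p = l ^ (-p) * x⁻¹ := by
      rw [← Real.rpow_neg_one z, ← Real.rpow_mul hz.le, hzdef,
        Real.mul_rpow hl.le (le_of_lt (Real.rpow_pos_of_pos hx0 _)),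
        ← Real.rpow_mul hx0.le]
      rw [show (1/p) * (-1 * p) = -1 by field_simp, Real.rpow_neg_one]
      rw [show -1 * p = -p by ring]
    have e2 : z ^ q = l ^ q * x ^ (q - 1) := by
      rw [hzdef, Real.mul_rpow hl.le (le_of_lt (Real.rpow_pos_of_pos hx0 _)),
        ← Real.rpow_mul hx0.le]
      congr 2
      rw [hpdef]; field_simp
    calc (1:ℝ) ≤ z⁻¹ ^ p / p + z ^ q / q := hyoung
      _ = l ^ q / q * x ^ (q - 1) + l ^ (-p) / p * x⁻¹ := by rw [e1, e2]; ring
  -- monotone function argument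
  have h4 : v - u ≤ l ^ q / q * X + l ^ (-p) / p * Y := by
    have hd : ∀ x ∈ Set.Icc u v,
        HasDerivAt (fun x : ℝ => l ^ q / q * (x ^ q / q) + l ^ (-p) / p * Real.log x - x)
          (l ^ q / q * x ^ (q - 1) + l ^ (-p) / p * x⁻¹ - 1) x := by
      intro x hx
      have hx0 : 0 < x := lt_of_lt_of_le hu hx.1
      have h1 : HasDerivAt (fun x : ℝ => l ^ q / q * (x ^ q / q))
          (l ^ q / q * (q * x ^ (q - 1) / q)) x :=
        ((Real.hasDerivAt_rpow_const (Or.inl hx0.ne')).div_const q).const_mul _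
      have h2 : HasDerivAt (fun x : ℝ => l ^ (-p) / p * Real.log x)
          (l ^ (-p) / p * x⁻¹) x := (Real.hasDerivAt_log hx0.ne').const_mul _
      have h3 := (h1.add h2).sub (hasDerivAt_id' x)
      have e : l ^ q / q * (q * x ^ (q - 1) / q) + l ^ (-p) / p * x⁻¹ - 1
          = l ^ q / q * x ^ (q - 1) + l ^ (-p) / p * x⁻¹ - 1 := by
        field_simp
      rw [e] at h3
      exact h3
    have h0 : ∀ x ∈ Set.Icc u v,
        0 ≤ l ^ q / q * x ^ (q - 1) + l ^ (-p) / p * x⁻¹ - 1 := by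
      intro x hx
      have := young x hx
      linarith
    have h := deriv_trick _ _ huv.le hd h0
    have e3 : l ^ q / q * X = l ^ q / q * (v ^ q / q) - l ^ q / q * (u ^ q / q) := by
      rw [hXdef]; ring
    have e4 : l ^ (-p) / p * Y
        = l ^ (-p) / p * Real.log v - l ^ (-p) / p * Real.log u := by
      rw [hYdef]; ring
    linarith
  -- compute the optimal value
  have hlq : l ^ q = (Y / X) ^ (1/p) := by
    rw [hldef, ← Real.rpow_mul (div_nonneg hY.le hX.le)]
    congr 1
    field_simp
  have hlp : l ^ (-p) = (Y / X) ^ (-(1/q)) := by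
    rw [hldef, ← Real.rpow_mul (div_nonneg hY.le hX.le)]
    congr 1
    field_simp
  have key1 : (Y / X) ^ (1/p) * X = X ^ (1/q) * Y ^ (1/p) := by
    rw [Real.div_rpow hY.le hX.le]
    calc Y ^ (1/p) / X ^ (1/p) * X = Y ^ (1/p) * (X ^ (1:ℝ) / X ^ (1/p)) := by
          rw [Real.rpow_one]; ring
      _ = Y ^ (1/p) * X ^ (1 - 1/p) := by rw [← Real.rpow_sub hX]
      _ = X ^ (1/q) * Y ^ (1/p) := by
          rw [show (1:ℝ) - 1/p = 1/q by linarith]; ring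
  have key2 : (Y / X) ^ (-(1/q)) * Y = X ^ (1/q) * Y ^ (1/p) := by
    rw [Real.rpow_neg (div_nonneg hY.le hX.le), Real.div_rpow hY.le hX.le,
      inv_div]
    calc X ^ (1/q) / Y ^ (1/q) * Y = X ^ (1/q) * (Y ^ (1:ℝ) / Y ^ (1/q)) := by
          rw [Real.rpow_one]; ring
      _ = X ^ (1/q) * Y ^ (1 - 1/q) := by rw [← Real.rpow_sub hY]
      _ = X ^ (1/q) * Y ^ (1/p) := by rw [h1p]
  calc v - u ≤ l ^ q / q * X + l ^ (-p) / p * Y := h4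
    _ = (Y / X) ^ (1/p) * X * (1/q) + (Y / X) ^ (-(1/q)) * Y * (1/p) := by
        rw [hlq, hlp]; ring
    _ = X ^ (1/q) * Y ^ (1/p) * (1/q + 1/p) := by rw [key1, key2]; ring
    _ = X ^ (1/q) * Y ^ (1 - 1/q) := by
        rw [show 1/q + 1/p = 1 by linarith, h1p]; ring

lemma Cq_half {q : ℝ} (hq : 1 < q) : (1:ℝ)/2 ≤ ((q-1)/(2*q-1)) ^ (1-1/q) := by
  have hq1 : 0 < q - 1 := sub_pos.2 hq
  have hq0 : 0 < q := lt_trans one_pos hq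
  have h2q : 0 < 2*q - 1 := by linarith
  set p : ℝ := q / (q-1) with hpdef
  have hp1 : 1 ≤ p := by rw [hpdef, le_div_iff₀ hq1]; linarith
  have hbp : p + 1 ≤ (2:ℝ) ^ p := by
    have := one_add_mul_self_le_rpow_one_add (by norm_num : (-1:ℝ) ≤ 1) hp1
    norm_num at this
    linarith
  have hfrac : (2:ℝ) ^ (-p) ≤ (q-1)/(2*q-1) := by
    have e : (q-1)/(2*q-1) = (p+1)⁻¹ := by
      rw [hpdef]; rw [inv_eq_one_div]; rw [div_eq_div_iff h2q.ne' (by positivity)]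
      field_simp
      ring
    rw [e, Real.rpow_neg (by norm_num)]
    exact inv_anti₀ (by positivity) hbp
  have hθ : (0:ℝ) ≤ 1 - 1/q := by
    have : 1/q < 1 := by rw [div_lt_one hq0]; linarith
    linarith
  have h := Real.rpow_le_rpow (by positivity) hfrac hθ
  rw [← Real.rpow_mul (by norm_num : (0:ℝ) ≤ 2)] at h
  have e2 : -p * (1 - 1/q) = -1 := by rw [hpdef]; field_simp
  rw [e2, Real.rpow_neg_one] at h
  rw [show (1:ℝ)/2 = 2⁻¹ by norm_num]
  exact h

lemma absAL {u v : ℝ} (hu : 0 < u) (huv : u < v) :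
    |Amean u v - Lmean u v| ≤ (v - u)/2 := by
  have hv : 0 < v := hu.trans huv
  have hY : 0 < Real.log v - Real.log u := sub_pos.2 (Real.log_lt_log hu huv)
  have h1 : Real.log v - Real.log u ≤ (v-u)/u := by
    have h := Real.log_le_sub_one_of_pos (div_pos hv hu)
    rw [Real.log_div hv.ne' hu.ne'] at h
    have e : v/u - 1 = (v-u)/u := by field_simp
    linarith [h, e]
  have h2 : (v-u)/v ≤ Real.log v - Real.log u := by
    have h := Real.log_le_sub_one_of_pos (div_pos hu hv)
    rw [Real.log_div hu.ne' hv.ne'] at h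
    have e : u/v - 1 = -((v-u)/v) := by field_simp; ring
    linarith [h, e]
  have hLl : u ≤ (v-u)/(Real.log v - Real.log u) := by
    rw [le_div_iff₀ hY]
    calc u * (Real.log v - Real.log u) ≤ u * ((v-u)/u) :=
          mul_le_mul_of_nonneg_left h1 hu.le
      _ = v - u := by field_simp
  have hLu : (v-u)/(Real.log v - Real.log u) ≤ v := by
    rw [div_le_iff₀ hY]
    calc v - u = v * ((v-u)/v) := by field_simp
      _ ≤ v * (Real.log v - Real.log u) := mul_le_mul_of_nonneg_left h2 hv.le
  rw [Amean, Lmean, abs_le]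
  constructor <;> linarith

theorem stmt_19 (a b s q : ℝ) (ha : 0 < a) (hab : a < b) (hb : b ≤ 1)
    (hs0 : 0 < s) (hs1 : s < 1) (hq : 1 < q) :
    |Amean (a ^ s) (b ^ s) - Lmean (a ^ s) (b ^ s)| ≤
      (s * (b - a) / (Lmean a b * Gmean a b ^ (2 * (s - 1) ^ 2))) *
        ((q - 1) / (2 * q - 1)) ^ (1 - 1 / q) *
        (Lmean (a ^ ((s ^ 2 - s + 1) * q)) (b ^ ((s ^ 2 - s + 1) * q))) ^ (1 / q) := by
  have hb0 : 0 < b := ha.trans hab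
  have hq0 : 0 < q := lt_trans one_pos hq
  have hD : 0 < Real.log b - Real.log a := sub_pos.2 (Real.log_lt_log ha hab)
  have hu : 0 < a ^ s := Real.rpow_pos_of_pos ha s
  have hv : 0 < b ^ s := Real.rpow_pos_of_pos hb0 s
  have huv : a ^ s < b ^ s := Real.rpow_lt_rpow ha.le hab hs0
  have he0 : (0:ℝ) ≤ (s-1)^2 := sq_nonneg _
  have hae : 0 < a ^ ((s-1)^2) := Real.rpow_pos_of_pos ha _
  have hbe : 0 < b ^ ((s-1)^2) := Real.rpow_pos_of_pos hb0 _
  have hba : 0 < b - a := sub_pos.2 hab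
  -- abbreviations
  set D : ℝ := Real.log b - Real.log a with hDdef
  set X : ℝ := ((b ^ s) ^ q - (a ^ s) ^ q) / q with hXdef
  have hX : 0 < X := div_pos (sub_pos.2 (Real.rpow_lt_rpow hu.le huv hq0)) hq0
  have hYpos : 0 < s * D := mul_pos hs0 hD
  have hYl : Real.log (b ^ s) - Real.log (a ^ s) = s * D := by
    rw [Real.log_rpow ha, Real.log_rpow hb0, hDdef]; ring
  -- rewrite of the first RHS factor
  have hGm : Gmean a b ^ (2 * (s - 1) ^ 2) = a ^ ((s-1)^2) * b ^ ((s-1)^2) := by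
    rw [Gmean, Real.sqrt_eq_rpow, ← Real.rpow_mul (by positivity),
      show (1:ℝ)/2 * (2 * (s-1)^2) = (s-1)^2 by ring,
      Real.mul_rpow ha.le hb0.le]
  have hfac : s * (b - a) / (Lmean a b * Gmean a b ^ (2 * (s - 1) ^ 2))
      = s * D / (a ^ ((s-1)^2) * b ^ ((s-1)^2)) := by
    rw [hGm, Lmean, ← hDdef]
    rw [div_eq_div_iff (by positivity) (by positivity)]
    field_simp
  -- rewrite of the last factor
  set r : ℝ := (s ^ 2 - s + 1) * q with hrdef
  have hr : 0 < r := by nlinarith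
  have hLr : Lmean (a ^ r) (b ^ r) = (b ^ r - a ^ r) / (r * D) := by
    rw [Lmean, Real.log_rpow ha, Real.log_rpow hb0, hDdef]
    ring_nf
  -- the power-sum comparison
  have hps : a ^ ((s-1)^2 * q) * (X / s) ≤ (b ^ r - a ^ r) / r := by
    have h := powsum (m := s*q) (k := (s-1)^2*q) ha hab.le (mul_pos hs0 hq0)
      (by positivity)
    have e1 : s*q + (s-1)^2*q = r := by rw [hrdef]; ring
    have e2 : (b ^ (s*q) - a ^ (s*q)) / (s*q) = X / s := by
      rw [hXdef, Real.rpow_mul ha.le, Real.rpow_mul hb0.le, div_div, mul_comm q s]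
    rw [e1, e2] at h
    exact h
  have hLrbound : a ^ ((s-1)^2) * X ^ (1/q) / (s*D) ^ (1/q)
      ≤ (Lmean (a ^ r) (b ^ r)) ^ (1/q) := by
    rw [hLr]
    have h1 : a ^ ((s-1)^2 * q) * X / (s*D) ≤ (b ^ r - a ^ r) / (r * D) := by
      rw [div_le_div_iff₀ (by positivity) (by positivity)]
      calc a ^ ((s-1)^2 * q) * X * (r * D) = (a ^ ((s-1)^2 * q) * (X / s)) * (s * r * D) := by
            field_simp
        _ ≤ ((b ^ r - a ^ r) / r) * (s * r * D) := by
            apply mul_le_mul_of_nonneg_right hps (by positivity)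
        _ = (b ^ r - a ^ r) * (s * D) := by field_simp
    have h2 := Real.rpow_le_rpow (by positivity) h1 (by positivity : (0:ℝ) ≤ 1/q)
    have e3 : (a ^ ((s-1)^2 * q) * X / (s*D)) ^ (1/q)
        = a ^ ((s-1)^2) * X ^ (1/q) / (s*D) ^ (1/q) := by
      rw [Real.div_rpow (by positivity) (by positivity),
        Real.mul_rpow (by positivity) (by positivity),
        ← Real.rpow_mul ha.le,
        show (s-1)^2 * q * (1/q) = (s-1)^2 by field_simp]
    rw [e3] at h2
    exact h2
  -- main chain
  rw [hfac]
  calc |Amean (a ^ s) (b ^ s) - Lmean (a ^ s) (b ^ s)| ≤ (b ^ s - a ^ s)/2 :=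
        absAL hu huv
    _ ≤ X ^ (1/q) * (s*D) ^ (1 - 1/q) / 2 := by
        have h := holder2 hu huv hq
        rw [hYl, ← hXdef] at h
        linarith
    _ ≤ s * D / (a ^ ((s-1)^2) * b ^ ((s-1)^2)) * ((q - 1) / (2 * q - 1)) ^ (1 - 1 / q) *
        (Lmean (a ^ r) (b ^ r)) ^ (1/q) := by
        have hC := Cq_half hq
        have hstep : s * D / (a ^ ((s-1)^2) * b ^ ((s-1)^2)) * ((q - 1) / (2 * q - 1)) ^ (1 - 1 / q) *
            (Lmean (a ^ r) (b ^ r)) ^ (1/q)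
            ≥ s * D / (a ^ ((s-1)^2) * b ^ ((s-1)^2)) * (1/2) *
              (a ^ ((s-1)^2) * X ^ (1/q) / (s*D) ^ (1/q)) := by
          apply mul_le_mul
          · apply mul_le_mul_of_nonneg_left hC (by positivity)
          · exact hLrbound
          · positivity
          · positivity
        have hEq : s * D / (a ^ ((s-1)^2) * b ^ ((s-1)^2)) * (1/2) *
            (a ^ ((s-1)^2) * X ^ (1/q) / (s*D) ^ (1/q))
            = X ^ (1/q) * ((s*D) / (s*D) ^ (1/q)) / 2 / b ^ ((s-1)^2) := by
          field_simp
        have hYq : (s*D) / (s*D) ^ (1/q) = (s*D) ^ (1 - 1/q) := by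
          rw [Real.rpow_sub hYpos, Real.rpow_one]
        have hb1 : b ^ ((s-1)^2) ≤ 1 := Real.rpow_le_one hb0.le hb he0
        have hfinal : X ^ (1/q) * (s*D) ^ (1 - 1/q) / 2
            ≤ X ^ (1/q) * (s*D) ^ (1 - 1/q) / 2 / b ^ ((s-1)^2) := by
          rw [le_div_iff₀ hbe]
          have hnn : (0:ℝ) ≤ X ^ (1/q) * (s*D) ^ (1 - 1/q) / 2 := by positivity
          nlinarith
        rw [hEq, hYq] at hstep
        linarith
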